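/- Let G be a connected bipartite graph on n vertices. Then ρ_s(G) ≤ √(⌊n/2⌋·⌈n/2⌉), with equality if and only if G is the complete bipartite graph K_{⌊n/2⌋, ⌈n/2⌉}. -/

import Mathlib

open Polynomial Matrix

variable {V : Type*} [Fintype V] [DecidableEq V]

/-- `S` is a skew-adjacency matrix of the simple graph `G`. -/
def IsSkewAdj (G : SimpleGraph V) (S : Matrix V V ℝ) : Prop :=
  (∀ i j, S j i = - S i j) ∧
  (∀ i j, G.Adj i j → S i j = 1 ∨ S i j = -1) ∧
  (∀ i j, ¬ G.Adj i j → S i j = 0)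

/-- Spectral radius of a complex square matrix. -/
noncomputable def specRad (M : Matrix V V ℂ) : ℝ :=
  sSup {r : ℝ | ∃ z : ℂ, M.charpoly.IsRoot z ∧ r = ‖z‖}

/-- The number of matchings of `G` covering exactly `k` vertices. -/
noncomputable def matchCount (G : SimpleGraph V) (k : ℕ) : ℕ :=
  {M : G.Subgraph | M.IsMatching ∧ M.verts.ncard = k}.ncard

/-- The matching polynomial of `G`, as a polynomial over `ℂ`. -/
noncomputable def matchingPoly (G : SimpleGraph V) : Polynomial ℂ :=
  ∑ k ∈ Finset.range (Fintype.card V + 1),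
    Polynomial.C ((-1 : ℂ) ^ (k / 2) * (matchCount G k : ℂ)) *
      Polynomial.X ^ (Fintype.card V - k)

/-- The maximum skew spectral radius of `G`. -/
noncomputable def maxSkewSpecRad (G : SimpleGraph V) : ℝ :=
  sSup {r : ℝ | ∃ S : Matrix V V ℝ, IsSkewAdj G S ∧ r = specRad (S.map Complex.ofReal)}

/-- `G` contains an even cycle. -/
def HasEvenCycle (G : SimpleGraph V) : Prop :=
  ∃ (v : V) (w : G.Walk v v), w.IsCycle ∧ Even w.length

section AuxLemmas

set_option linter.unusedSectionVars false


lemma nat_prod_le {r s n : ℕ} (h : r + s = n) : r * s ≤ n / 2 * ((n + 1) / 2) := by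
  rcases Nat.even_or_odd n with ⟨q, hq⟩ | ⟨q, hq⟩
  · have h1 : n / 2 = q := by omega
    have h2 : (n + 1) / 2 = q := by omega
    rw [h1, h2]
    have hrs : r + s = 2 * q := by omega
    zify
    have hrs' : (r : ℤ) + s = 2 * q := by exact_mod_cast hrs
    nlinarith [sq_nonneg ((r : ℤ) - s)]
  · have h1 : n / 2 = q := by omega
    have h2 : (n + 1) / 2 = q + 1 := by omega
    rw [h1, h2]
    have hrs : r + s = 2 * q + 1 := by omega
    have hrs' : (r : ℤ) + s = 2 * q + 1 := by exact_mod_cast hrs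
    have hne : (r : ℤ) ≠ s := by omega
    have h3 : 1 ≤ ((r : ℤ) - s) ^ 2 := by
      rcases lt_or_gt_of_ne hne with h | h <;> nlinarith
    zify
    nlinarith

lemma nat_prod_eq {r s n : ℕ} (h : r + s = n) (he : r * s = n / 2 * ((n + 1) / 2)) :
    (r = n / 2 ∧ s = (n + 1) / 2) ∨ (r = (n + 1) / 2 ∧ s = n / 2) := by
  rcases Nat.even_or_odd n with ⟨q, hq⟩ | ⟨q, hq⟩
  · have h1 : n / 2 = q := by omega
    have h2 : (n + 1) / 2 = q := by omega
    rw [h1, h2] at he ⊢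
    have hrs' : (r : ℤ) + s = 2 * q := by omega
    have he' : (r : ℤ) * s = q * q := by exact_mod_cast he
    have hd : ((r : ℤ) - s) ^ 2 = 0 := by nlinarith
    have : (r : ℤ) - s = 0 := by
      exact pow_eq_zero_iff two_ne_zero |>.mp hd
    omega
  · have h1 : n / 2 = q := by omega
    have h2 : (n + 1) / 2 = q + 1 := by omega
    rw [h1, h2] at he ⊢
    have hrs' : (r : ℤ) + s = 2 * q + 1 := by omega
    have he' : (r : ℤ) * s = q * (q + 1) := by exact_mod_cast he
    have hd : ((r : ℤ) - s) ^ 2 = 1 := by nlinarith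
    have : (r : ℤ) - s = 1 ∨ (r : ℤ) - s = -1 := by
      rcases lt_trichotomy ((r : ℤ) - s) 0 with hc | hc | hc
      · right; nlinarith
      · exfalso; rw [hc] at hd; norm_num at hd
      · left; nlinarith
    omega

lemma eval_charpoly' (M : Matrix V V ℂ) (z : ℂ) :
    M.charpoly.eval z = (Matrix.scalar V z - M).det := by
  rw [Matrix.charpoly, eval_det, matPolyEquiv_charmatrix, eval_sub, eval_X, eval_C]

lemma scalar_eq_smul_one (z : ℂ) : Matrix.scalar V z = z • (1 : Matrix V V ℂ) := by
  ext i j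
  by_cases h : i = j <;> simp [Matrix.scalar_apply, Matrix.one_apply, Matrix.diagonal, h]

lemma isRoot_charpoly_iff (M : Matrix V V ℂ) (z : ℂ) :
    M.charpoly.IsRoot z ↔ ∃ v : V → ℂ, v ≠ 0 ∧ M.mulVec v = z • v := by
  have hsc : ∀ v : V → ℂ, (Matrix.scalar V z - M).mulVec v = z • v - M.mulVec v := by
    intro v
    rw [Matrix.sub_mulVec, scalar_eq_smul_one, Matrix.smul_mulVec, Matrix.one_mulVec]
  constructor
  · intro h
    have hdet : (Matrix.scalar V z - M).det = 0 := by rw [← eval_charpoly']; exact h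
    obtain ⟨v, hv, hmv⟩ := Matrix.exists_mulVec_eq_zero_iff.mpr hdet
    refine ⟨v, hv, ?_⟩
    have := hsc v
    rw [hmv] at this
    exact (sub_eq_zero.mp this.symm).symm
  · rintro ⟨v, hv, hev⟩
    have hmv : (Matrix.scalar V z - M).mulVec v = 0 := by rw [hsc, hev]; simp
    have hdet : (Matrix.scalar V z - M).det = 0 :=
      Matrix.exists_mulVec_eq_zero_iff.mp ⟨v, hv, hmv⟩
    show M.charpoly.eval z = 0
    rw [eval_charpoly']; exact hdet

lemma eigen_bound {G : SimpleGraph V} (C : G.Coloring (Fin 2))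
    {S : Matrix V V ℝ} (hS : IsSkewAdj G S) {z : ℂ} {v : V → ℂ} (hv : v ≠ 0)
    (hev : (S.map Complex.ofReal).mulVec v = z • v) :
    ‖z‖ ≤ Real.sqrt (((Finset.univ.filter (fun i => C i = 0)).card : ℝ) *
        ((Finset.univ.filter (fun i => ¬ C i = 0)).card : ℝ)) ∧
      (‖z‖ = Real.sqrt (((Finset.univ.filter (fun i => C i = 0)).card : ℝ) *
        ((Finset.univ.filter (fun i => ¬ C i = 0)).card : ℝ)) →
        0 < (Finset.univ.filter (fun i => C i = 0)).card *
            (Finset.univ.filter (fun i => ¬ C i = 0)).card →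
        ∀ i j, C i ≠ C j → G.Adj i j) := by
  classical
  set X := Finset.univ.filter (fun i : V => C i = 0) with hXdef
  set Y := Finset.univ.filter (fun i : V => ¬ C i = 0) with hYdef
  set r : ℝ := (X.card : ℝ) with hrdef
  set s : ℝ := (Y.card : ℝ) with hsdef
  set u : V → ℝ := fun i => ‖v i‖ with hudef
  have hu : ∀ i, 0 ≤ u i := fun i => norm_nonneg _
  set A : ℝ := ∑ i ∈ X, u i with hAdef
  set B : ℝ := ∑ i ∈ Y, u i with hBdef
  set P : ℝ := ∑ i ∈ X, u i ^ 2 with hPdef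
  set Q : ℝ := ∑ i ∈ Y, u i ^ 2 with hQdef
  have hA0 : 0 ≤ A := Finset.sum_nonneg fun i _ => hu i
  have hB0 : 0 ≤ B := Finset.sum_nonneg fun i _ => hu i
  have hP0 : 0 ≤ P := Finset.sum_nonneg fun i _ => sq_nonneg _
  have hQ0 : 0 ≤ Q := Finset.sum_nonneg fun i _ => sq_nonneg _
  have hr0 : (0:ℝ) ≤ r := Nat.cast_nonneg _
  have hs0 : (0:ℝ) ≤ s := Nat.cast_nonneg _
  have hsplit : ∀ f : V → ℝ, (∑ i ∈ X, f i) + ∑ i ∈ Y, f i = ∑ i, f i := fun f =>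
    Finset.sum_filter_add_sum_filter_not _ _ f
  have hPQ : P + Q = ∑ i, u i ^ 2 := hsplit _
  have hPQpos : 0 < P + Q := by
    rw [hPQ]
    obtain ⟨i0, hi0⟩ := Function.ne_iff.mp hv
    refine Finset.sum_pos' (fun i _ => sq_nonneg _) ⟨i0, Finset.mem_univ _, ?_⟩
    have : 0 < u i0 := norm_pos_iff.mpr hi0
    positivity
  -- step 1
  have step1 : ∀ i, ‖z‖ * u i ≤ ∑ j, (if G.Adj i j then (1:ℝ) else 0) * u j := by
    intro i
    have h1 : ‖z‖ * u i = ‖(S.map Complex.ofReal).mulVec v i‖ := by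
      rw [hev]; simp [hudef, Pi.smul_apply, smul_eq_mul, norm_mul]
    have h2 : (S.map Complex.ofReal).mulVec v i = ∑ j, ((S i j : ℝ) : ℂ) * v j := by
      simp [Matrix.mulVec, dotProduct, Matrix.map_apply]
    rw [h1, h2]
    refine le_trans (norm_sum_le _ _) (le_of_eq ?_)
    refine Finset.sum_congr rfl fun j _ => ?_
    rw [norm_mul, Complex.norm_real, Real.norm_eq_abs]
    by_cases h : G.Adj i j
    · rcases hS.2.1 i j h with h' | h' <;> simp [h, h', hudef]
    · simp [h, hS.2.2 i j h, hudef]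
  -- step 2
  have step2 : ‖z‖ * (P + Q) ≤
      ∑ i, ∑ j, (if G.Adj i j then (1:ℝ) else 0) * (u i * u j) := by
    rw [hPQ]
    calc ‖z‖ * ∑ i, u i ^ 2 = ∑ i, u i * (‖z‖ * u i) := by
          rw [Finset.mul_sum]; exact Finset.sum_congr rfl fun i _ => by ring
      _ ≤ ∑ i, u i * ∑ j, (if G.Adj i j then (1:ℝ) else 0) * u j :=
          Finset.sum_le_sum fun i _ => mul_le_mul_of_nonneg_left (step1 i) (hu i)
      _ = ∑ i, ∑ j, (if G.Adj i j then (1:ℝ) else 0) * (u i * u j) := by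
          refine Finset.sum_congr rfl fun i _ => ?_
          rw [Finset.mul_sum]
          exact Finset.sum_congr rfl fun j _ => by ring
  -- step 3
  have hterm : ∀ i j, (if G.Adj i j then (1:ℝ) else 0) * (u i * u j) ≤
      (if C i ≠ C j then (1:ℝ) else 0) * (u i * u j) := by
    intro i j
    by_cases h : G.Adj i j
    · have hc : C i ≠ C j := C.valid h
      simp [h, hc]
    · rw [if_neg h, zero_mul]
      split_ifs
      · have := mul_nonneg (hu i) (hu j); linarith
      · simp
  have step3 : ∑ i, ∑ j, (if G.Adj i j then (1:ℝ) else 0) * (u i * u j) ≤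
      ∑ i, ∑ j, (if C i ≠ C j then (1:ℝ) else 0) * (u i * u j) :=
    Finset.sum_le_sum fun i _ => Finset.sum_le_sum fun j _ => hterm i j
  -- step 4
  have step4 : ∑ i, ∑ j, (if C i ≠ C j then (1:ℝ) else 0) * (u i * u j) = 2 * (A * B) := by
    have hpoint : ∀ i j, (if C i ≠ C j then (1:ℝ) else 0) * (u i * u j)
        = (if C i = 0 then u i else 0) * (if ¬ C j = 0 then u j else 0)
        + (if ¬ C i = 0 then u i else 0) * (if C j = 0 then u j else 0) := by
      intro i j
      have h2 : ∀ a : Fin 2, a = 0 ∨ a = 1 := by decide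
      have h01 : (0 : Fin 2) ≠ 1 := by decide
      rcases h2 (C i) with h | h <;> rcases h2 (C j) with h' | h' <;>
        simp [h, h', h01, h01.symm] <;> ring
    calc ∑ i, ∑ j, (if C i ≠ C j then (1:ℝ) else 0) * (u i * u j)
        = ∑ i, ∑ j, ((if C i = 0 then u i else 0) * (if ¬ C j = 0 then u j else 0)
            + (if ¬ C i = 0 then u i else 0) * (if C j = 0 then u j else 0)) := by
          exact Finset.sum_congr rfl fun i _ => Finset.sum_congr rfl fun j _ => hpoint i j
      _ = (∑ i, if C i = 0 then u i else 0) * (∑ j, if ¬ C j = 0 then u j else 0)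
          + (∑ i, if ¬ C i = 0 then u i else 0) * (∑ j, if C j = 0 then u j else 0) := by
          rw [Finset.sum_mul_sum, Finset.sum_mul_sum, ← Finset.sum_add_distrib]
          exact Finset.sum_congr rfl fun i _ => Finset.sum_add_distrib
      _ = 2 * (A * B) := by
          have hA' : A = ∑ i, if C i = 0 then u i else 0 := by
            rw [hAdef, hXdef, Finset.sum_filter]
          have hB' : B = ∑ i, if ¬ C i = 0 then u i else 0 := by
            rw [hBdef, hYdef, Finset.sum_filter]
          rw [← hA', ← hB']; ring
  -- step 5 (Cauchy-Schwarz)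
  have step5A : A ^ 2 ≤ r * P := by
    have := sq_sum_le_card_mul_sum_sq (s := X) (f := u)
    simpa [hAdef, hPdef, hrdef] using this
  have step5B : B ^ 2 ≤ s * Q := by
    have := sq_sum_le_card_mul_sum_sq (s := Y) (f := u)
    simpa [hBdef, hQdef, hsdef] using this
  -- step 6
  have step6 : 2 * (A * B) ≤ Real.sqrt (r * s) * (P + Q) := by
    have hABsq : (A ^ 2) * (B ^ 2) ≤ (r * P) * (s * Q) :=
      mul_le_mul step5A step5B (sq_nonneg _) (le_trans (sq_nonneg _) step5A)
    have h6 : (2 * (A * B)) ^ 2 ≤ (r * s) * (P + Q) ^ 2 := by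
      nlinarith [mul_nonneg (mul_nonneg hr0 hs0) (sq_nonneg (P - Q)), hABsq]
    have h7 : 0 ≤ 2 * (A * B) := by positivity
    calc 2 * (A * B) = Real.sqrt ((2 * (A * B)) ^ 2) := (Real.sqrt_sq h7).symm
      _ ≤ Real.sqrt ((r * s) * (P + Q) ^ 2) := Real.sqrt_le_sqrt h6
      _ = Real.sqrt (r * s) * (P + Q) := by
          rw [Real.sqrt_mul (by positivity), Real.sqrt_sq (by positivity)]
  have main : ‖z‖ * (P + Q) ≤ Real.sqrt (r * s) * (P + Q) :=
    le_trans step2 (le_trans step3 (le_trans (le_of_eq step4) step6))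
  have conc1 : ‖z‖ ≤ Real.sqrt (r * s) :=
    le_of_mul_le_mul_right main hPQpos
  refine ⟨conc1, ?_⟩
  intro heq hposn
  clear_value A B P Q r s
  have hrs_pos : (0:ℝ) < r * s := by
    rw [hrdef, hsdef]; exact_mod_cast hposn
  have hx : 0 < X.card := by
    rcases Nat.eq_zero_or_pos X.card with h | h
    · rw [h] at hposn; simp at hposn
    · exact h
  have hy : 0 < Y.card := by
    rcases Nat.eq_zero_or_pos Y.card with h | h
    · rw [h] at hposn; simp at hposn
    · exact h
  have hrpos : (0:ℝ) < r := by rw [hrdef]; exact_mod_cast hx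
  have hspos : (0:ℝ) < s := by rw [hsdef]; exact_mod_cast hy
  have e2 : 2 * (A * B) = Real.sqrt (r * s) * (P + Q) := by
    refine le_antisymm step6 ?_
    calc Real.sqrt (r*s) * (P+Q) = ‖z‖ * (P+Q) := by rw [heq]
      _ ≤ ∑ i, ∑ j, (if G.Adj i j then (1:ℝ) else 0) * (u i * u j) := step2
      _ ≤ ∑ i, ∑ j, (if C i ≠ C j then (1:ℝ) else 0) * (u i * u j) := step3
      _ = 2 * (A*B) := step4
  have e1 : ∑ i, ∑ j, (if G.Adj i j then (1:ℝ) else 0) * (u i * u j)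
      = ∑ i, ∑ j, (if C i ≠ C j then (1:ℝ) else 0) * (u i * u j) := by
    refine le_antisymm step3 ?_
    calc ∑ i, ∑ j, (if C i ≠ C j then (1:ℝ) else 0) * (u i * u j)
        = 2 * (A*B) := step4
      _ = Real.sqrt (r*s) * (P+Q) := e2
      _ = ‖z‖ * (P+Q) := by rw [heq]
      _ ≤ ∑ i, ∑ j, (if G.Adj i j then (1:ℝ) else 0) * (u i * u j) := step2
  have hsq : Real.sqrt (r*s) ^ 2 = r * s := Real.sq_sqrt hrs_pos.le
  have e2sq : (r*s)*(P+Q)^2 = 4*(A^2*B^2) := by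
    have h := congrArg (fun t : ℝ => t^2) e2
    calc (r*s)*(P+Q)^2 = (Real.sqrt (r*s))^2*(P+Q)^2 := by rw [hsq]
      _ = (Real.sqrt (r*s)*(P+Q))^2 := by ring
      _ = (2*(A*B))^2 := h.symm
      _ = 4*(A^2*B^2) := by ring
  have hABsq : A^2*B^2 ≤ (r*P)*(s*Q) :=
    mul_le_mul step5A step5B (sq_nonneg _) (le_trans (sq_nonneg _) step5A)
  have hPQeq : P = Q := by
    have k2 : (r*s)*(P-Q)^2 ≤ 0 := by
      have hrw : (r*s)*(P-Q)^2 = 4*(A^2*B^2) - 4*((r*s)*(P*Q)) := by linear_combination e2sq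
      have hr2 : (r*P)*(s*Q) = (r*s)*(P*Q) := by ring
      rw [hrw]
      linarith [hABsq.trans_eq hr2]
    have hd0 : (P-Q)^2 ≤ 0 := by
      by_contra hcon
      push_neg at hcon
      linarith [mul_pos hrs_pos hcon]
    have hd : P - Q = 0 := pow_eq_zero_iff two_ne_zero |>.mp (le_antisymm hd0 (sq_nonneg _))
    linarith
  have hQpos : 0 < Q := by linarith [hPQeq ▸ hPQpos]
  have hPpos : 0 < P := by linarith
  have hkey : A^2*B^2 = (r*P)*(s*Q) := by
    rw [hPQeq] at e2sq ⊢
    linear_combination (-1/4 : ℝ) * e2sq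
  have hA2 : A^2 = r * P := by
    refine le_antisymm step5A ?_
    have h1 : (r*P)*(s*Q) ≤ A^2*(s*Q) := by
      rw [← hkey]; exact mul_le_mul_of_nonneg_left step5B (sq_nonneg A)
    exact le_of_mul_le_mul_right h1 (mul_pos hspos hQpos)
  have hB2 : B^2 = s * Q := by
    refine le_antisymm step5B ?_
    have h1 : (s*Q)*(r*P) ≤ B^2*(r*P) := by
      calc (s*Q)*(r*P) = A^2*B^2 := by rw [hkey]; ring
        _ ≤ (r*P)*B^2 := mul_le_mul_of_nonneg_right step5A (sq_nonneg B)
        _ = B^2*(r*P) := by ring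
    exact le_of_mul_le_mul_right h1 (mul_pos hrpos hPpos)
  -- constancy on the parts
  have hconstX : ∀ i ∈ X, ∀ j ∈ X, u i = u j := by
    have expand : ∀ i ∈ X, ∑ j ∈ X, (u i - u j)^2 = r * u i^2 - 2*u i*A + P := by
      intro i _
      calc ∑ j ∈ X, (u i - u j)^2 = ∑ j ∈ X, (u i^2 - 2*u i*u j + u j^2) :=
            Finset.sum_congr rfl fun j _ => by ring
        _ = (∑ _j ∈ X, u i^2) - (∑ j ∈ X, 2*u i*u j) + ∑ j ∈ X, u j^2 := by
            rw [Finset.sum_add_distrib, Finset.sum_sub_distrib]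
        _ = r * u i^2 - 2*u i*A + P := by
            rw [Finset.sum_const, nsmul_eq_mul, ← Finset.mul_sum, hrdef, hAdef, hPdef]
    have hsum0 : ∑ i ∈ X, ∑ j ∈ X, (u i - u j)^2 = 0 := by
      rw [Finset.sum_congr rfl expand]
      have : ∑ i ∈ X, (r * u i^2 - 2*u i*A + P)
          = r * P - 2*A*A + r*P := by
        rw [Finset.sum_add_distrib, Finset.sum_sub_distrib, Finset.sum_const, nsmul_eq_mul,
          ← Finset.mul_sum, ← Finset.sum_mul, ← Finset.mul_sum, hrdef, hAdef, hPdef]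
      rw [this]
      linear_combination (-2 : ℝ) * hA2
    intro i hi j hj
    have h1 := (Finset.sum_eq_zero_iff_of_nonneg
        (fun i _ => Finset.sum_nonneg fun j _ => sq_nonneg _)).mp hsum0 i hi
    have h2 := (Finset.sum_eq_zero_iff_of_nonneg (fun j _ => sq_nonneg _)).mp h1 j hj
    have h3 := pow_eq_zero_iff two_ne_zero |>.mp h2
    linarith
  have hconstY : ∀ i ∈ Y, ∀ j ∈ Y, u i = u j := by
    have expand : ∀ i ∈ Y, ∑ j ∈ Y, (u i - u j)^2 = s * u i^2 - 2*u i*B + Q := by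
      intro i _
      calc ∑ j ∈ Y, (u i - u j)^2 = ∑ j ∈ Y, (u i^2 - 2*u i*u j + u j^2) :=
            Finset.sum_congr rfl fun j _ => by ring
        _ = (∑ _j ∈ Y, u i^2) - (∑ j ∈ Y, 2*u i*u j) + ∑ j ∈ Y, u j^2 := by
            rw [Finset.sum_add_distrib, Finset.sum_sub_distrib]
        _ = s * u i^2 - 2*u i*B + Q := by
            rw [Finset.sum_const, nsmul_eq_mul, ← Finset.mul_sum, hsdef, hBdef, hQdef]
    have hsum0 : ∑ i ∈ Y, ∑ j ∈ Y, (u i - u j)^2 = 0 := by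
      rw [Finset.sum_congr rfl expand]
      have : ∑ i ∈ Y, (s * u i^2 - 2*u i*B + Q)
          = s * Q - 2*B*B + s*Q := by
        rw [Finset.sum_add_distrib, Finset.sum_sub_distrib, Finset.sum_const, nsmul_eq_mul,
          ← Finset.mul_sum, ← Finset.sum_mul, ← Finset.mul_sum, hsdef, hBdef, hQdef]
      rw [this]
      linear_combination (-2 : ℝ) * hB2
    intro i hi j hj
    have h1 := (Finset.sum_eq_zero_iff_of_nonneg
        (fun i _ => Finset.sum_nonneg fun j _ => sq_nonneg _)).mp hsum0 i hi
    have h2 := (Finset.sum_eq_zero_iff_of_nonneg (fun j _ => sq_nonneg _)).mp h1 j hj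
    have h3 := pow_eq_zero_iff two_ne_zero |>.mp h2
    linarith
  have hXval : ∃ i0 ∈ X, 0 < u i0 := by
    by_contra hcon
    push_neg at hcon
    have hP' : P ≤ 0 := by
      rw [hPdef]
      refine Finset.sum_nonpos fun i hi => ?_
      have h0 : u i = 0 := le_antisymm (hcon i hi) (hu i)
      rw [h0]; norm_num
    linarith
  have hYval : ∃ i0 ∈ Y, 0 < u i0 := by
    by_contra hcon
    push_neg at hcon
    have hQ' : Q ≤ 0 := by
      rw [hQdef]
      refine Finset.sum_nonpos fun i hi => ?_
      have h0 : u i = 0 := le_antisymm (hcon i hi) (hu i)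
      rw [h0]; norm_num
    linarith
  obtain ⟨i0, hi0X, hi0pos⟩ := hXval
  obtain ⟨j0, hj0Y, hj0pos⟩ := hYval
  have hallpos : ∀ i, 0 < u i := by
    intro i
    by_cases h : C i = 0
    · have hiX : i ∈ X := by rw [hXdef]; simp [h]
      rw [hconstX i hiX i0 hi0X]; exact hi0pos
    · have hiY : i ∈ Y := by rw [hYdef]; simp [h]
      rw [hconstY i hiY j0 hj0Y]; exact hj0pos
  intro a b hab
  by_contra hadj
  have hdz : ∑ i, ∑ j, ((if C i ≠ C j then (1:ℝ) else 0) * (u i * u j)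
      - (if G.Adj i j then (1:ℝ) else 0) * (u i * u j)) = 0 := by
    simp only [Finset.sum_sub_distrib]
    rw [e1]; ring
  have h1 := (Finset.sum_eq_zero_iff_of_nonneg
      (fun p _ => Finset.sum_nonneg fun q _ => sub_nonneg.mpr (hterm p q))).mp hdz a
      (Finset.mem_univ a)
  have h2 := (Finset.sum_eq_zero_iff_of_nonneg
      (fun q _ => sub_nonneg.mpr (hterm a q))).mp h1 b (Finset.mem_univ b)
  rw [if_pos hab, if_neg hadj] at h2
  have hpos := mul_pos (hallpos a) (hallpos b)
  linarith [h2, hpos]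

lemma skewSet_finite (G : SimpleGraph V) : {S : Matrix V V ℝ | IsSkewAdj G S}.Finite := by
  classical
  apply Set.Finite.subset (Set.finite_range
    (fun f : V → V → Bool => Matrix.of fun i j =>
      if f i j then (1:ℝ) else if f j i then -1 else 0))
  intro S hS
  refine ⟨fun i j => decide (S i j = 1), ?_⟩
  ext i j
  simp only [Matrix.of_apply, decide_eq_true_eq]
  by_cases h : G.Adj i j
  · rcases hS.2.1 i j h with h1 | h1
    · rw [if_pos h1, h1]
    · have h2 : S j i = 1 := by rw [hS.1 i j, h1]; norm_num
      have hne : ¬ S i j = 1 := by rw [h1]; norm_num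
      rw [if_neg hne, if_pos h2, h1]
  · have h0 : S i j = 0 := hS.2.2 _ _ h
    have h0' : S j i = 0 := hS.2.2 _ _ (fun ha => h ha.symm)
    have hne : ¬ S i j = 1 := by rw [h0]; norm_num
    have hne' : ¬ S j i = 1 := by rw [h0']; norm_num
    rw [if_neg hne, if_neg hne', h0]

lemma exists_skew (G : SimpleGraph V) [LinearOrder V] : ∃ S, IsSkewAdj G S := by
  classical
  refine ⟨Matrix.of fun i j => if G.Adj i j then (if i < j then (1:ℝ) else -1) else 0,
    ?_, ?_, ?_⟩
  · intro i j
    by_cases h : G.Adj i j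
    · have h' : G.Adj j i := h.symm
      have hne : i ≠ j := h.ne
      rcases lt_or_gt_of_ne hne with hlt | hlt
      · simp [Matrix.of_apply, h, h', hlt, not_lt_of_gt hlt, le_of_lt hlt]
      · simp [Matrix.of_apply, h, h', hlt, not_lt_of_gt hlt]
    · have h' : ¬ G.Adj j i := fun ha => h ha.symm
      simp [Matrix.of_apply, h, h']
  · intro i j h
    by_cases hlt : i < j <;> simp [Matrix.of_apply, h, hlt]
  · intro i j h
    simp [Matrix.of_apply, h]

lemma rootSet_finite (M : Matrix V V ℂ) :
    {x : ℝ | ∃ z : ℂ, M.charpoly.IsRoot z ∧ x = ‖z‖}.Finite := by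
  have h1 : {x : ℝ | ∃ z : ℂ, M.charpoly.IsRoot z ∧ x = ‖z‖}
      = (fun z : ℂ => ‖z‖) '' {z : ℂ | M.charpoly.IsRoot z} := by
    ext x
    simp only [Set.mem_setOf_eq, Set.mem_image]
    constructor
    · rintro ⟨z, hz, rfl⟩; exact ⟨z, hz, rfl⟩
    · rintro ⟨z, hz, rfl⟩; exact ⟨z, hz, rfl⟩
  rw [h1]
  exact (Polynomial.finite_setOf_isRoot (M.charpoly_monic.ne_zero)).image _

lemma exists_root_charpoly (M : Matrix V V ℂ) (h : Nonempty V) :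
    ∃ z : ℂ, M.charpoly.IsRoot z := by
  apply Complex.exists_root
  have h1 : M.charpoly.natDegree = Fintype.card V := M.charpoly_natDegree_eq_dim
  have h2 : 0 < M.charpoly.natDegree := by
    rw [h1]; exact Fintype.card_pos
  exact Polynomial.natDegree_pos_iff_degree_pos.mp h2

lemma abs_root_le_specRad (M : Matrix V V ℂ) {z : ℂ} (hz : M.charpoly.IsRoot z) :
    ‖z‖ ≤ specRad M :=
  le_csSup (rootSet_finite M).bddAbove ⟨z, hz, rfl⟩

lemma specRad_nonneg (M : Matrix V V ℂ) (h : Nonempty V) : 0 ≤ specRad M := by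
  obtain ⟨z, hz⟩ := exists_root_charpoly M h
  exact le_trans (norm_nonneg z) (abs_root_le_specRad M hz)

lemma exists_root_abs_eq_specRad (M : Matrix V V ℂ) (h : Nonempty V) :
    ∃ z : ℂ, M.charpoly.IsRoot z ∧ ‖z‖ = specRad M := by
  have hfin := rootSet_finite M
  obtain ⟨z0, hz0⟩ := exists_root_charpoly M h
  have hne : {x : ℝ | ∃ z : ℂ, M.charpoly.IsRoot z ∧ x = ‖z‖}.Nonempty :=
    ⟨‖z0‖, z0, hz0, rfl⟩
  have hmem := Set.Nonempty.csSup_mem hne hfin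
  obtain ⟨z, hz, hzeq⟩ := hmem
  exact ⟨z, hz, hzeq.symm⟩

lemma iso_of_pred {n a b : ℕ} (G : SimpleGraph (Fin n)) (p : Fin n → Prop) [DecidablePred p]
    (ha : Fintype.card {i // p i} = a) (hb : Fintype.card {i // ¬ p i} = b)
    (hadj : ∀ i j, G.Adj i j ↔ ((p i ∧ ¬ p j) ∨ (¬ p i ∧ p j))) :
    Nonempty (G ≃g completeBipartiteGraph (Fin a) (Fin b)) := by
  classical
  let e : Fin n ≃ (Fin a ⊕ Fin b) :=
    (Equiv.sumCompl p).symm.trans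
      (Equiv.sumCongr (Fintype.equivFinOfCardEq ha) (Fintype.equivFinOfCardEq hb))
  refine ⟨⟨e, ?_⟩⟩
  have hleft : ∀ k (hk : p k), e k = Sum.inl (Fintype.equivFinOfCardEq ha ⟨k, hk⟩) := by
    intro k hk
    simp [e, Equiv.sumCompl_symm_apply_of_pos hk]
  have hright : ∀ k (hk : ¬ p k), e k = Sum.inr (Fintype.equivFinOfCardEq hb ⟨k, hk⟩) := by
    intro k hk
    simp [e, Equiv.sumCompl_symm_apply_of_neg hk]
  intro i j
  show (completeBipartiteGraph (Fin a) (Fin b)).Adj (e i) (e j) ↔ G.Adj i j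
  by_cases hi : p i <;> by_cases hj : p j
  · rw [hleft i hi, hleft j hj]; simp [hadj i j, hi, hj]
  · rw [hleft i hi, hright j hj]; simp [hadj i j, hi, hj]
  · rw [hright i hi, hleft j hj]; simp [hadj i j, hi, hj]
  · rw [hright i hi, hright j hj]; simp [hadj i j, hi, hj]

def auxS {a b : ℕ} : (Fin a ⊕ Fin b) → (Fin a ⊕ Fin b) → ℝ
  | Sum.inl _, Sum.inl _ => 0
  | Sum.inl _, Sum.inr _ => 1
  | Sum.inr _, Sum.inl _ => -1
  | Sum.inr _, Sum.inr _ => 0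

noncomputable def auxW {a b : ℕ} : (Fin a ⊕ Fin b) → ℂ
  | Sum.inl _ => ((Real.sqrt b : ℝ) : ℂ)
  | Sum.inr _ => ((Real.sqrt a : ℝ) : ℂ) * Complex.I

lemma exists_skew_eig {n a b : ℕ} (ha : 0 < a) (hb : 0 < b) (G : SimpleGraph (Fin n))
    (φ : G ≃g completeBipartiteGraph (Fin a) (Fin b)) :
    ∃ S : Matrix (Fin n) (Fin n) ℝ, IsSkewAdj G S ∧
      ∃ v : Fin n → ℂ, v ≠ 0 ∧
        (S.map Complex.ofReal).mulVec v
          = (Complex.I * ((Real.sqrt ((a : ℝ) * (b : ℝ)) : ℝ) : ℂ)) • v := by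
  classical
  refine ⟨Matrix.of fun i j => auxS (φ i) (φ j), ⟨?_, ?_, ?_⟩, ?_⟩
  · intro i j
    rcases hx : φ i with p | p <;> rcases hy : φ j with q | q <;>
      simp [auxS, Matrix.of_apply, hx, hy]
  · intro i j hadj
    have hK : (completeBipartiteGraph (Fin a) (Fin b)).Adj (φ i) (φ j) :=
      φ.map_adj_iff.mpr hadj
    rcases hx : φ i with p | p <;> rcases hy : φ j with q | q <;>
      rw [hx, hy] at hK <;> simp [auxS, Matrix.of_apply, hx, hy] <;> simp at hK
  · intro i j hnadj
    have hK : ¬ (completeBipartiteGraph (Fin a) (Fin b)).Adj (φ i) (φ j) :=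
      fun h => hnadj (φ.map_adj_iff.mp h)
    rcases hx : φ i with p | p <;> rcases hy : φ j with q | q <;>
      rw [hx, hy] at hK <;> simp [auxS, Matrix.of_apply, hx, hy] <;> simp at hK
  · refine ⟨fun i => auxW (φ i), ?_, ?_⟩
    · intro hzero
      have h1 : auxW (φ (φ.symm (Sum.inl (⟨0, ha⟩ : Fin a)))) = 0 := congrFun hzero _
      rw [RelIso.apply_symm_apply] at h1
      have : ((Real.sqrt b : ℝ) : ℂ) = 0 := h1
      have hb' : (0:ℝ) < Real.sqrt b := Real.sqrt_pos.mpr (by exact_mod_cast hb)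
      rw [Complex.ofReal_eq_zero] at this
      linarith
    · have hab : Real.sqrt ((a:ℝ) * (b:ℝ)) = Real.sqrt a * Real.sqrt b :=
        Real.sqrt_mul (Nat.cast_nonneg a) _
      have hbb : Real.sqrt (b:ℝ) * Real.sqrt (b:ℝ) = (b:ℝ) :=
        Real.mul_self_sqrt (Nat.cast_nonneg b)
      have haa : Real.sqrt (a:ℝ) * Real.sqrt (a:ℝ) = (a:ℝ) :=
        Real.mul_self_sqrt (Nat.cast_nonneg a)
      have habC : ((Real.sqrt ((a:ℝ) * (b:ℝ)) : ℝ) : ℂ)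
          = ((Real.sqrt a : ℝ) : ℂ) * ((Real.sqrt b : ℝ) : ℂ) := by
        rw [hab]; push_cast; ring
      have hbbC : ((Real.sqrt b : ℝ) : ℂ) * ((Real.sqrt b : ℝ) : ℂ) = ((b : ℕ) : ℂ) := by
        rw [← Complex.ofReal_mul, hbb]; push_cast; ring
      have haaC : ((Real.sqrt a : ℝ) : ℂ) * ((Real.sqrt a : ℝ) : ℂ) = ((a : ℕ) : ℂ) := by
        rw [← Complex.ofReal_mul, haa]; push_cast; ring
      funext i
      show ∑ j, (((Matrix.of fun i j => auxS (φ i) (φ j)) i j : ℝ) : ℂ) * auxW (φ j) = _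
      have hsum : ∑ j, ((auxS (φ i) (φ j) : ℝ) : ℂ) * auxW (φ j)
          = ∑ x : Fin a ⊕ Fin b, ((auxS (φ i) x : ℝ) : ℂ) * auxW x :=
        Equiv.sum_comp φ.toEquiv (fun x => ((auxS (φ i) x : ℝ) : ℂ) * auxW x)
      simp only [Matrix.of_apply]
      rw [hsum, Fintype.sum_sum_type]
      rcases hx : φ i with p | p
      · simp only [auxS, Pi.smul_apply, hx, auxW, smul_eq_mul]
        rw [Finset.sum_const, Finset.sum_const]
        simp only [Finset.card_univ, Fintype.card_fin, nsmul_eq_mul]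
        push_cast
        rw [habC]
        linear_combination (-(Complex.I * ((Real.sqrt (a:ℝ) : ℝ) : ℂ))) * hbbC
      · simp only [auxS, Pi.smul_apply, hx, auxW, smul_eq_mul]
        rw [Finset.sum_const, Finset.sum_const]
        simp only [Finset.card_univ, Fintype.card_fin, nsmul_eq_mul]
        push_cast
        rw [habC]
        have hI : Complex.I * Complex.I = -1 := Complex.I_mul_I
        linear_combination (((Real.sqrt (b:ℝ) : ℝ) : ℂ)) * haaC
          + (-(((Real.sqrt (a:ℝ):ℝ):ℂ) * ((Real.sqrt (a:ℝ):ℝ):ℂ) * ((Real.sqrt (b:ℝ):ℝ):ℂ))) * hI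

end AuxLemmas

/-- For a connected bipartite graph `G` on `n` vertices,
`ρ_s(G) ≤ √(⌊n/2⌋⌈n/2⌉)`, with equality iff `G` is `K_{⌊n/2⌋,⌈n/2⌉}`. -/
theorem maxSkewSpecRad_le_of_connected_bipartite {n : ℕ}
    (G : SimpleGraph (Fin n)) (hconn : G.Connected) (hbip : G.Colorable 2) :
    maxSkewSpecRad G ≤ Real.sqrt ((n / 2 : ℕ) * ((n + 1) / 2 : ℕ)) ∧
    (maxSkewSpecRad G = Real.sqrt ((n / 2 : ℕ) * ((n + 1) / 2 : ℕ)) ↔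
      Nonempty (G ≃g completeBipartiteGraph (Fin (n / 2)) (Fin ((n + 1) / 2)))) := by
  classical
  obtain ⟨C⟩ := hbip
  have hn : 0 < n := Fin.pos_iff_nonempty.mpr hconn.nonempty
  set B : ℝ := Real.sqrt ((n / 2 : ℕ) * ((n + 1) / 2 : ℕ)) with hBdef
  have hB0 : 0 ≤ B := Real.sqrt_nonneg _
  set Xc := (Finset.univ.filter (fun i : Fin n => C i = 0)).card with hXc
  set Yc := (Finset.univ.filter (fun i : Fin n => ¬ C i = 0)).card with hYc
  have hsum : Xc + Yc = n := by
    rw [hXc, hYc, Finset.card_filter_add_card_filter_not]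
    simp
  have hprod_le : Xc * Yc ≤ n / 2 * ((n + 1) / 2) := nat_prod_le hsum
  have hsqrt_le : Real.sqrt ((Xc:ℝ) * (Yc:ℝ)) ≤ B := by
    rw [hBdef]
    apply Real.sqrt_le_sqrt
    push_cast
    exact_mod_cast hprod_le
  have hroot_bound : ∀ S : Matrix (Fin n) (Fin n) ℝ, IsSkewAdj G S →
      ∀ z : ℂ, (S.map Complex.ofReal).charpoly.IsRoot z →
        ‖z‖ ≤ Real.sqrt ((Xc:ℝ) * (Yc:ℝ)) := by
    intro S hS z hz
    obtain ⟨v, hv, hev⟩ := (isRoot_charpoly_iff _ _).mp hz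
    exact (eigen_bound C hS hv hev).1
  have hspec_le : ∀ S : Matrix (Fin n) (Fin n) ℝ, IsSkewAdj G S →
      specRad (S.map Complex.ofReal) ≤ B := by
    intro S hS
    unfold specRad
    apply Real.sSup_le _ hB0
    rintro x ⟨z, hz, rfl⟩
    exact (hroot_bound S hS z hz).trans hsqrt_le
  have hO_le : ∀ x ∈ {r : ℝ | ∃ S : Matrix (Fin n) (Fin n) ℝ,
      IsSkewAdj G S ∧ r = specRad (S.map Complex.ofReal)}, x ≤ B := by
    rintro x ⟨S, hS, rfl⟩
    exact hspec_le S hS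
  have hpart1 : maxSkewSpecRad G ≤ B := by
    unfold maxSkewSpecRad
    exact Real.sSup_le hO_le hB0
  have hObdd : BddAbove {r : ℝ | ∃ S : Matrix (Fin n) (Fin n) ℝ,
      IsSkewAdj G S ∧ r = specRad (S.map Complex.ofReal)} := ⟨B, hO_le⟩
  have hge0 : 0 ≤ maxSkewSpecRad G := by
    obtain ⟨S0, hS0⟩ := exists_skew G
    have h1 : 0 ≤ specRad (S0.map Complex.ofReal) := specRad_nonneg _ ⟨⟨0, hn⟩⟩
    have h2 : specRad (S0.map Complex.ofReal) ≤ maxSkewSpecRad G := by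
      unfold maxSkewSpecRad
      exact le_csSup hObdd ⟨S0, hS0, rfl⟩
    linarith
  refine ⟨hpart1, ?_, ?_⟩
  · -- equality implies complete bipartite
    intro heq
    by_cases hn1 : n = 1
    · subst hn1
      refine ⟨⟨(Equiv.emptySum (Fin 0) (Fin 1)).symm, ?_⟩⟩
      intro i j
      have hij : i = j := Subsingleton.elim i j
      subst hij
      constructor
      · intro h
        rcases h with ⟨h1, h2⟩ | ⟨h1, h2⟩ <;> simp_all
      · intro h
        exact absurd h (G.irrefl)
    · have hn2 : 2 ≤ n := by omega
      have hOfin : Set.Finite {r : ℝ | ∃ S : Matrix (Fin n) (Fin n) ℝ,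
          IsSkewAdj G S ∧ r = specRad (S.map Complex.ofReal)} := by
        have himg : {r : ℝ | ∃ S : Matrix (Fin n) (Fin n) ℝ,
            IsSkewAdj G S ∧ r = specRad (S.map Complex.ofReal)}
            = (fun S : Matrix (Fin n) (Fin n) ℝ => specRad (S.map Complex.ofReal)) ''
              {S | IsSkewAdj G S} := by
          ext x
          simp only [Set.mem_setOf_eq, Set.mem_image]
          constructor
          · rintro ⟨S, hS, rfl⟩; exact ⟨S, hS, rfl⟩
          · rintro ⟨S, hS, rfl⟩; exact ⟨S, hS, rfl⟩
        rw [himg]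
        exact (skewSet_finite G).image _
      have hOne : Set.Nonempty {r : ℝ | ∃ S : Matrix (Fin n) (Fin n) ℝ,
          IsSkewAdj G S ∧ r = specRad (S.map Complex.ofReal)} := by
        obtain ⟨S0, hS0⟩ := exists_skew G
        exact ⟨_, S0, hS0, rfl⟩
      have hmem : maxSkewSpecRad G ∈ {r : ℝ | ∃ S : Matrix (Fin n) (Fin n) ℝ,
          IsSkewAdj G S ∧ r = specRad (S.map Complex.ofReal)} := by
        unfold maxSkewSpecRad
        exact Set.Nonempty.csSup_mem hOne hOfin
      obtain ⟨S, hS, hSspec⟩ := hmem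
      obtain ⟨z, hzroot, hzabs⟩ := exists_root_abs_eq_specRad (S.map Complex.ofReal) ⟨⟨0, hn⟩⟩
      have hzB : ‖z‖ = B := by rw [hzabs, ← hSspec]; exact heq
      have hle1 : ‖z‖ ≤ Real.sqrt ((Xc:ℝ) * (Yc:ℝ)) := hroot_bound S hS z hzroot
      have hBeq : Real.sqrt ((Xc:ℝ) * (Yc:ℝ)) = B :=
        le_antisymm hsqrt_le (by rw [← hzB]; exact hle1)
      have hprod_eq : Xc * Yc = n / 2 * ((n + 1) / 2) := by
        have h1 : ((Xc:ℝ) * (Yc:ℝ)) = ((n / 2 : ℕ) : ℝ) * (((n + 1) / 2 : ℕ) : ℝ) := by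
          rw [hBdef] at hBeq
          exact (Real.sqrt_inj (by positivity) (by positivity)).mp hBeq
        exact_mod_cast h1
      have hposXY : 0 < Xc * Yc := by
        rw [hprod_eq]
        exact Nat.mul_pos (by omega) (by omega)
      obtain ⟨v, hv, hev⟩ := (isRoot_charpoly_iff _ _).mp hzroot
      have hfull := (eigen_bound C hS hv hev).2 (hzB.trans hBeq.symm) hposXY
      have hadj' : ∀ i j, G.Adj i j ↔ ((C i = 0 ∧ ¬ C j = 0) ∨ (¬ C i = 0 ∧ C j = 0)) := by
        intro i j
        have hiff : G.Adj i j ↔ C i ≠ C j := ⟨fun h => C.valid h, hfull i j⟩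
        rw [hiff]
        have h2 : ∀ a : Fin 2, a = 0 ∨ a = 1 := by decide
        have h01 : (0 : Fin 2) ≠ 1 := by decide
        rcases h2 (C i) with h | h <;> rcases h2 (C j) with h' | h' <;>
          simp [h, h', h01, h01.symm]
      have hcard1 : Fintype.card {i : Fin n // C i = 0} = Xc := by
        rw [hXc]; exact Fintype.card_subtype _
      have hcard2 : Fintype.card {i : Fin n // ¬ C i = 0} = Yc := by
        rw [hYc]; exact Fintype.card_subtype _
      rcases nat_prod_eq hsum hprod_eq with ⟨h1, h2⟩ | ⟨h1, h2⟩
      · exact iso_of_pred G (fun i => C i = 0) (hcard1.trans h1) (hcard2.trans h2) hadj'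
      · refine iso_of_pred G (fun i => ¬ C i = 0) (hcard2.trans h2) ?_ ?_
        · have hcc : Fintype.card {i : Fin n // ¬ ¬ C i = 0}
              = Fintype.card {i : Fin n // C i = 0} :=
            Fintype.card_congr (Equiv.subtypeEquivRight fun i => not_not)
          rw [hcc]
          exact hcard1.trans h1
        · intro i j
          rw [hadj' i j]
          tauto
  · -- complete bipartite implies equality
    rintro ⟨φ⟩
    refine le_antisymm hpart1 ?_
    by_cases hn1 : n = 1
    · have hB1 : B = 0 := by
        rw [hBdef]
        subst hn1
        norm_num
      rw [hB1]
      exact hge0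
    · have hn2 : 2 ≤ n := by omega
      obtain ⟨S, hS, v, hv, hev⟩ := exists_skew_eig (a := n / 2) (b := (n + 1) / 2)
        (by omega) (by omega) G φ
      set z : ℂ := Complex.I *
        ((Real.sqrt (((n / 2 : ℕ) : ℝ) * (((n + 1) / 2 : ℕ) : ℝ)) : ℝ) : ℂ) with hz
      have hzroot : (S.map Complex.ofReal).charpoly.IsRoot z :=
        (isRoot_charpoly_iff _ _).mpr ⟨v, hv, hev⟩
      have hzabs : ‖z‖ = B := by
        rw [hz, hBdef, norm_mul, Complex.norm_I, Complex.norm_real, Real.norm_eq_abs, one_mul,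
          abs_of_nonneg (Real.sqrt_nonneg _)]
      have h1 : B ≤ specRad (S.map Complex.ofReal) := by
        rw [← hzabs]
        exact abs_root_le_specRad _ hzroot
      have h2 : specRad (S.map Complex.ofReal) ≤ maxSkewSpecRad G := by
        unfold maxSkewSpecRad
        exact le_csSup hObdd ⟨S, hS, rfl⟩
      linarith
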